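/- Let n ≥ 5 and let λ = (λ₁,...,λᵣ) be a partition of n with rank(λ) > 0 (i.e., λ₁ > r). Then there exists a partition λ' of n with 0 ≤ rank(λ') < rank(λ) and Σᵢ (λ'ᵢ)² < Σᵢ λᵢ². -/

import Mathlib

lemma aux_sup_mem (M : Multiset ℕ) (h : M ≠ 0) : M.sup ∈ M := by
  induction M using Multiset.induction with
  | empty => simp at h
  | cons a s ih =>
    rw [Multiset.sup_cons]
    rcases eq_or_ne s 0 with rfl | hs
    · simp
    · rcases le_total a s.sup with hle | hle
      · rw [sup_eq_right.mpr hle]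
        exact Multiset.mem_cons_of_mem (ih hs)
      · rw [sup_eq_left.mpr hle]
        exact Multiset.mem_cons_self a s

/-- For `n ≥ 5` and a partition of `n` with strictly positive rank, there is a partition
of `n` with smaller (but still nonnegative) rank and strictly smaller sum of squares. -/
theorem stmt_2 (n : ℕ) (hn : 5 ≤ n) (P : n.Partition)
    (h : P.parts.card < P.parts.sup) :
    ∃ Q : n.Partition, Q.parts.card ≤ Q.parts.sup ∧
      Q.parts.sup - Q.parts.card < P.parts.sup - P.parts.card ∧
      (Q.parts.map (fun x => x ^ 2)).sum < (P.parts.map (fun x => x ^ 2)).sum := by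
  obtain ⟨M, hM⟩ : ∃ M, P.parts = M := ⟨_, rfl⟩
  obtain ⟨s, hs⟩ : ∃ s, M.sup = s := ⟨_, rfl⟩
  obtain ⟨r, hrr⟩ : ∃ r, Multiset.card M = r := ⟨_, rfl⟩
  rw [hM, hs, hrr] at h ⊢
  have hpos : ∀ {i}, i ∈ M → 0 < i := fun hi => P.parts_pos (hM ▸ hi)
  have hsum : M.sum = n := hM ▸ P.parts_sum
  have hMne : M ≠ 0 := by
    intro h0
    rw [h0] at hsum
    simp at hsum
    omega
  have hs_mem : s ∈ M := hs ▸ aux_sup_mem M hMne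
  have hr1 : 1 ≤ r := by
    rw [← hrr]
    exact Multiset.card_pos.mpr hMne
  have hs2 : 2 ≤ s := by omega
  obtain ⟨E, hE⟩ : ∃ E, M.erase s = E := ⟨_, rfl⟩
  have hME : M = s ::ₘ E := hE ▸ (Multiset.cons_erase hs_mem).symm
  have hcardE : Multiset.card E = r - 1 := by
    rw [← hE, Multiset.card_erase_of_mem hs_mem, hrr]; rfl
  have hEsum : s + E.sum = n := by
    rw [hME, Multiset.sum_cons] at hsum; exact hsum
  have hEle : ∀ a ∈ E, a ≤ s := fun a ha =>
    hs ▸ Multiset.le_sup (Multiset.mem_of_mem_erase (hE ▸ ha))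
  have hEpos : ∀ a ∈ E, 0 < a := fun a ha => hpos (Multiset.mem_of_mem_erase (hE ▸ ha))
  have hPsq : (M.map (fun x => x ^ 2)).sum = s ^ 2 + (E.map (fun x => x ^ 2)).sum := by
    rw [hME, Multiset.map_cons, Multiset.sum_cons]
  by_cases hA : s ∈ E ∨ r + 2 ≤ s
  · -- Case A : replace s by (s-1) and 1
    have hQsum : ((s - 1) ::ₘ 1 ::ₘ E).sum = n := by
      simp only [Multiset.sum_cons]; omega
    have hQpos : ∀ {i}, i ∈ (s - 1) ::ₘ 1 ::ₘ E → 0 < i := by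
      intro i hi
      simp only [Multiset.mem_cons] at hi
      rcases hi with rfl | rfl | hi
      · omega
      · omega
      · exact hEpos i hi
    refine ⟨⟨(s - 1) ::ₘ 1 ::ₘ E, hQpos, hQsum⟩, ?_⟩
    set u := ((s - 1) ::ₘ 1 ::ₘ E).sup with hu
    have hcardQ : Multiset.card ((s - 1) ::ₘ 1 ::ₘ E) = r + 1 := by
      simp [Multiset.card_cons, hcardE]; omega
    have hule : u ≤ s := by
      rw [hu, Multiset.sup_cons, Multiset.sup_cons]
      refine sup_le (by omega) (sup_le (by omega) (Multiset.sup_le.mpr hEle))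
    have huge : s - 1 ≤ u := by
      rw [hu, Multiset.sup_cons]
      exact le_sup_left
    have hukey : r + 1 ≤ u := by
      rcases hA with hmem | hge
      · have : s ≤ u := by
          rw [hu, Multiset.sup_cons, Multiset.sup_cons]
          exact le_trans (Multiset.le_sup hmem) (le_trans le_sup_right le_sup_right)
        omega
      · omega
    have hsq : (((s - 1) ::ₘ 1 ::ₘ E).map (fun x => x ^ 2)).sum
        = (s - 1) ^ 2 + 1 + (E.map (fun x => x ^ 2)).sum := by
      simp only [Multiset.map_cons, Multiset.sum_cons]; ring_nf
    refine ⟨by simpa [hcardQ] using hukey, by simp only [hcardQ]; omega, ?_⟩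
    rw [hsq, hPsq]
    have : (s - 1) ^ 2 + 1 < s ^ 2 := by
      obtain ⟨t, rfl⟩ : ∃ t, s = t + 2 := ⟨s - 2, by omega⟩
      have h1 : t + 2 - 1 = t + 1 := by omega
      rw [h1]; nlinarith
    omega
  · push_neg at hA
    obtain ⟨hsnotE, hslt⟩ := hA
    have hseq : s = r + 1 := by omega
    have hr2 : 2 ≤ r := by
      by_contra hc
      have : r = 1 := by omega
      have : E = 0 := by
        rw [← Multiset.card_eq_zero, hcardE]; omega
      rw [this] at hEsum
      simp at hEsum
      omega
    have hEne : E ≠ 0 := by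
      intro h0
      rw [h0] at hcardE
      simp at hcardE
      omega
    have hEle' : ∀ a ∈ E, a ≤ r := by
      intro a ha
      have := hEle a ha
      have : a ≠ s := fun hc => hsnotE (hc ▸ ha)
      omega
    by_cases hB : ∃ a ∈ E, a ≤ r - 1
    · -- Case B1 : move 1 from s to a
      obtain ⟨a, haE, ha⟩ := hB
      obtain ⟨F, hF⟩ : ∃ F, E.erase a = F := ⟨_, rfl⟩
      have hEF : E = a ::ₘ F := hF ▸ (Multiset.cons_erase haE).symm
      have hFsum : a + F.sum = E.sum := by rw [hEF, Multiset.sum_cons]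
      have hQsum : ((s - 1) ::ₘ (a + 1) ::ₘ F).sum = n := by
        simp only [Multiset.sum_cons]; omega
      have hQpos : ∀ {i}, i ∈ (s - 1) ::ₘ (a + 1) ::ₘ F → 0 < i := by
        intro i hi
        simp only [Multiset.mem_cons] at hi
        rcases hi with rfl | rfl | hi
        · omega
        · omega
        · exact hEpos i (hEF ▸ Multiset.mem_cons_of_mem hi)
      refine ⟨⟨(s - 1) ::ₘ (a + 1) ::ₘ F, hQpos, hQsum⟩, ?_⟩
      have hcardF : Multiset.card F = r - 2 := by
        rw [← hF, Multiset.card_erase_of_mem haE, hcardE, Nat.pred_eq_sub_one]; omega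
      have hcardQ : Multiset.card ((s - 1) ::ₘ (a + 1) ::ₘ F) = r := by
        simp [Multiset.card_cons, hcardF]; omega
      have hsupQ : ((s - 1) ::ₘ (a + 1) ::ₘ F).sup = s - 1 := by
        apply le_antisymm
        · rw [Multiset.sup_cons, Multiset.sup_cons]
          refine sup_le le_rfl (sup_le (by omega) (Multiset.sup_le.mpr ?_))
          intro b hb
          have := hEle' b (hEF ▸ Multiset.mem_cons_of_mem hb)
          omega
        · rw [Multiset.sup_cons]; exact le_sup_left
      have hsq : (((s - 1) ::ₘ (a + 1) ::ₘ F).map (fun x => x ^ 2)).sum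
          = (s - 1) ^ 2 + (a + 1) ^ 2 + (F.map (fun x => x ^ 2)).sum := by
        simp only [Multiset.map_cons, Multiset.sum_cons]; ring
      have hEsq : (E.map (fun x => x ^ 2)).sum = a ^ 2 + (F.map (fun x => x ^ 2)).sum := by
        rw [hEF, Multiset.map_cons, Multiset.sum_cons]
      refine ⟨by simp [hsupQ, hcardQ]; omega, by simp [hsupQ, hcardQ]; omega, ?_⟩
      rw [hsq, hPsq, hEsq]
      have : (s - 1) ^ 2 + (a + 1) ^ 2 < s ^ 2 + a ^ 2 := by
        obtain ⟨t, rfl⟩ : ∃ t, s = t + 2 := ⟨s - 2, by omega⟩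
        have h1 : t + 2 - 1 = t + 1 := by omega
        have h2 : a ≤ t := by omega
        rw [h1]
        have e1 : (t + 1) ^ 2 = t ^ 2 + 2 * t + 1 := by ring
        have e2 : (a + 1) ^ 2 = a ^ 2 + 2 * a + 1 := by ring
        have e3 : (t + 2) ^ 2 = t ^ 2 + 4 * t + 4 := by ring
        linarith
      omega
    · -- Case B2 : all parts of E equal r; split one r into (r-1) and 1
      push_neg at hB
      obtain ⟨a, haE⟩ := Multiset.exists_mem_of_ne_zero hEne
      have haeq : a = r := by
        have h1 := hEle' a haE
        have h2 := hB a haE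
        omega
      obtain ⟨F, hF⟩ : ∃ F, E.erase a = F := ⟨_, rfl⟩
      have hEF : E = a ::ₘ F := hF ▸ (Multiset.cons_erase haE).symm
      have hFsum : a + F.sum = E.sum := by rw [hEF, Multiset.sum_cons]
      have hQsum : (s ::ₘ (a - 1) ::ₘ 1 ::ₘ F).sum = n := by
        simp only [Multiset.sum_cons]; omega
      have hQpos : ∀ {i}, i ∈ s ::ₘ (a - 1) ::ₘ 1 ::ₘ F → 0 < i := by
        intro i hi
        simp only [Multiset.mem_cons] at hi
        rcases hi with rfl | rfl | rfl | hi
        · omega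
        · omega
        · omega
        · exact hEpos i (hEF ▸ Multiset.mem_cons_of_mem hi)
      refine ⟨⟨s ::ₘ (a - 1) ::ₘ 1 ::ₘ F, hQpos, hQsum⟩, ?_⟩
      have hcardF : Multiset.card F = r - 2 := by
        rw [← hF, Multiset.card_erase_of_mem haE, hcardE, Nat.pred_eq_sub_one]; omega
      have hcardQ : Multiset.card (s ::ₘ (a - 1) ::ₘ 1 ::ₘ F) = r + 1 := by
        simp [Multiset.card_cons, hcardF]; omega
      have hsupQ : (s ::ₘ (a - 1) ::ₘ 1 ::ₘ F).sup = s := by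
        apply le_antisymm
        · simp only [Multiset.sup_cons]
          refine sup_le le_rfl (sup_le (by omega) (sup_le (by omega)
            (Multiset.sup_le.mpr ?_)))
          intro b hb
          exact hEle b (hEF ▸ Multiset.mem_cons_of_mem hb)
        · rw [Multiset.sup_cons]; exact le_sup_left
      have hsq : ((s ::ₘ (a - 1) ::ₘ 1 ::ₘ F).map (fun x => x ^ 2)).sum
          = s ^ 2 + (a - 1) ^ 2 + 1 + (F.map (fun x => x ^ 2)).sum := by
        simp only [Multiset.map_cons, Multiset.sum_cons]; ring_nf
      have hEsq : (E.map (fun x => x ^ 2)).sum = a ^ 2 + (F.map (fun x => x ^ 2)).sum := by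
        rw [hEF, Multiset.map_cons, Multiset.sum_cons]
      refine ⟨by simp [hsupQ, hcardQ]; omega, by simp [hsupQ, hcardQ]; omega, ?_⟩
      rw [hsq, hPsq, hEsq]
      have : (a - 1) ^ 2 + 1 < a ^ 2 := by
        obtain ⟨t, rfl⟩ : ∃ t, a = t + 2 := ⟨a - 2, by omega⟩
        have h1 : t + 2 - 1 = t + 1 := by omega
        rw [h1]
        have e1 : (t + 1) ^ 2 = t ^ 2 + 2 * t + 1 := by ring
        have e3 : (t + 2) ^ 2 = t ^ 2 + 4 * t + 4 := by ring
        linarith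
      omega
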